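/- Let Γ be a simple connected 5-regular graph of order n, and let μ be the algebraic connectivity of Γ (the second smallest eigenvalue of the Laplacian matrix of Γ). Then the girth of Γ satisfies girth(Γ) ≥ ⌈nμ/(n+μ)⌉. -/

import Mathlib

open Finset SimpleGraph

/-- `μ` is the second smallest (counted with multiplicity) value of the family `e`. -/
def IsSecondSmallest {ι : Type*} (e : ι → ℝ) (μ : ℝ) : Prop :=
  ∃ i₀ i₁ : ι, i₀ ≠ i₁ ∧ e i₀ ≤ μ ∧ e i₁ = μ ∧ ∀ j : ι, j ≠ i₀ → μ ≤ e j

/-- `lam` is the largest value of the family `e`. -/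
def IsLargest {ι : Type*} (e : ι → ℝ) (lam : ℝ) : Prop :=
  (∃ i : ι, e i = lam) ∧ ∀ i : ι, e i ≤ lam

section Aux
open Matrix


lemma dot_sum' {V : Type*} [Fintype V] (y : V → ℝ) (f : V → (V → ℝ)) :
    y ⬝ᵥ (∑ j, f j) = ∑ j, y ⬝ᵥ (f j) := by
  simp only [dotProduct, Finset.sum_apply, Finset.mul_sum]
  exact Finset.sum_comm

lemma spectral_gap {V : Type*} [Fintype V] [DecidableEq V]
    (G : SimpleGraph V) [DecidableRel G.Adj] (hconn : G.Connected)
    (hL : (G.lapMatrix ℝ).IsHermitian) (mu : ℝ) (i₀ : V)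
    (hmin : ∀ j : V, j ≠ i₀ → mu ≤ hL.eigenvalues j) (hmupos : 0 < mu)
    (x : V → ℝ) (hx : ∑ v, x v = 0) :
    mu * (∑ v, x v ^ 2) ≤ x ⬝ᵥ (G.lapMatrix ℝ *ᵥ x) := by
  haveI : Nonempty V := hconn.nonempty
  set e := hL.eigenvalues with he
  set b := hL.eigenvectorBasis with hbdef
  set c : V → ℝ := fun j => x ⬝ᵥ ⇑(b j) with hc
  have hcdef : ∀ j, c j = x ⬝ᵥ ⇑(b j) := fun j => rfl
  -- eigenvalue at i₀ is 0
  have hdet : (G.lapMatrix ℝ).det = 0 := by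
    rw [← Matrix.exists_mulVec_eq_zero_iff]
    exact ⟨fun _ => 1, Function.ne_iff.mpr ⟨Classical.arbitrary V, one_ne_zero⟩,
      G.lapMatrix_mulVec_const_eq_zero⟩
  have hzero : ∃ k, e k = 0 := by
    have := hL.det_eq_prod_eigenvalues
    rw [hdet] at this
    obtain ⟨k, -, hk⟩ := Finset.prod_eq_zero_iff.mp this.symm
    exact ⟨k, hk⟩
  have he0 : e i₀ = 0 := by
    obtain ⟨k, hk⟩ := hzero
    rcases eq_or_ne k i₀ with rfl | hki
    · exact hk
    · exact absurd (hk ▸ hmin k hki) (by linarith)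
  -- the i₀ eigenvector is constant
  have hkervec : G.lapMatrix ℝ *ᵥ ⇑(b i₀) = 0 := by
    rw [hL.mulVec_eigenvectorBasis, ← he, he0, zero_smul]
  have hconst : ∀ u v : V, b i₀ u = b i₀ v := by
    intro u v
    exact G.lapMatrix_mulVec_eq_zero_iff_forall_reachable.mp hkervec u v (hconn.preconnected u v)
  have hci₀ : c i₀ = 0 := by
    obtain ⟨v₀⟩ := ‹Nonempty V›
    have hcv : ∀ v, b i₀ v = b i₀ v₀ := fun v => hconst v v₀
    rw [hcdef i₀]
    calc ∑ v, x v * b i₀ v = ∑ v, x v * b i₀ v₀ :=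
          Finset.sum_congr rfl fun v _ => by rw [hcv v]
      _ = (∑ v, x v) * b i₀ v₀ := by rw [Finset.sum_mul]
      _ = 0 := by rw [hx, zero_mul]
  -- expansion of x
  have hexp : x = ∑ j, c j • ⇑(b j) := by
    have h := b.sum_repr (WithLp.toLp 2 x)
    have h2 : ∀ j, b.repr (WithLp.toLp 2 x) j = c j := by
      intro j
      rw [b.repr_apply_apply, hcdef j]
      simp only [PiLp.inner_apply, RCLike.inner_apply, starRingEnd_apply, star_trivial,
        dotProduct]
      all_goals exact Finset.sum_congr rfl fun v _ => mul_comm _ _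
    funext v
    calc x v = (∑ j, b.repr (WithLp.toLp 2 x) j • b j) v := by rw [h]
      _ = ∑ j, c j • b j v := by
          rw [WithLp.ofLp_sum, Finset.sum_apply]
          exact Finset.sum_congr rfl fun j _ => by rw [h2 j]; rfl
      _ = (∑ j, c j • ⇑(b j)) v := by simp
  -- sum of squares
  have hsq : ∑ v, x v ^ 2 = ∑ j, (c j) ^ 2 := by
    have h0 : ∑ v, x v ^ 2 = x ⬝ᵥ x := by
      simp [dotProduct, pow_two]
    rw [h0]
    nth_rewrite 2 [hexp]
    rw [dot_sum']
    refine Finset.sum_congr rfl fun j _ => ?_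
    rw [dotProduct_smul, smul_eq_mul, ← hcdef j, pow_two]
  -- quadratic form
  have hqf : x ⬝ᵥ (G.lapMatrix ℝ *ᵥ x) = ∑ j, e j * (c j) ^ 2 := by
    nth_rewrite 2 [hexp]
    have hmv : G.lapMatrix ℝ *ᵥ (∑ j, c j • ⇑(b j)) = ∑ j, (c j * e j) • ⇑(b j) := by
      rw [← Matrix.mulVecLin_apply, map_sum]
      refine Finset.sum_congr rfl fun j _ => ?_
      rw [_root_.map_smul, Matrix.mulVecLin_apply, hL.mulVec_eigenvectorBasis, ← he,
        smul_smul]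
    rw [hmv, dot_sum']
    refine Finset.sum_congr rfl fun j _ => ?_
    rw [dotProduct_smul, smul_eq_mul, ← hcdef j]
    ring
  rw [hqf, hsq, Finset.mul_sum]
  refine Finset.sum_le_sum fun j _ => ?_
  rcases eq_or_ne j i₀ with rfl | hj
  · simp [hci₀]
  · have := hmin j hj
    nlinarith [sq_nonneg (c j)]


lemma cut_bound {V : Type*} [Fintype V] [DecidableEq V]
    (G : SimpleGraph V) [DecidableRel G.Adj] (hconn : G.Connected)
    (hL : (G.lapMatrix ℝ).IsHermitian) (mu : ℝ) (i₀ : V)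
    (hmin : ∀ j : V, j ≠ i₀ → mu ≤ hL.eigenvalues j) (hmupos : 0 < mu)
    (hreg : G.IsRegularOfDegree 5) (S : Finset V)
    (hP : 2 * S.card ≤
      ((univ ×ˢ univ).filter fun p : V × V => p.1 ∈ S ∧ p.2 ∈ S ∧ G.Adj p.1 p.2).card) :
    mu * ((S.card : ℝ) - (S.card : ℝ)^2 / (Fintype.card V : ℝ)) ≤ 3 * (S.card : ℝ) := by
  haveI : Nonempty V := hconn.nonempty
  set n : ℝ := (Fintype.card V : ℝ) with hndef
  have hn1 : (1:ℝ) ≤ n := by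
    have := Fintype.card_pos (α := V)
    rw [hndef]; exact_mod_cast this
  have hn0 : n ≠ 0 := by linarith
  set s : ℝ := (S.card : ℝ) with hsdef
  set x : V → ℝ := fun v => (if v ∈ S then (1:ℝ) else 0) - s / n with hxdef
  have hs0 : ∑ v, x v = 0 := by
    rw [hxdef]
    rw [Finset.sum_sub_distrib, Finset.sum_boole, Finset.sum_const, Finset.card_univ,
      nsmul_eq_mul]
    simp only [Finset.filter_mem_eq_inter, Finset.univ_inter]
    field_simp
    rw [hsdef, hndef]; ring
  have hsq : ∑ v, x v ^ 2 = s - s^2/n := by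
    have hterm : ∀ v, x v ^ 2
        = (if v ∈ S then (1:ℝ) else 0) - 2*(s/n)*(if v ∈ S then 1 else 0) + (s/n)^2 := by
      intro v; by_cases hv : v ∈ S <;> simp [hxdef, hv] <;> ring
    rw [Finset.sum_congr rfl fun v _ => hterm v]
    rw [Finset.sum_add_distrib, Finset.sum_sub_distrib, Finset.sum_boole, ← Finset.mul_sum,
      Finset.sum_boole, Finset.sum_const, Finset.card_univ, nsmul_eq_mul]
    simp only [Finset.filter_mem_eq_inter, Finset.univ_inter]
    field_simp; ring
  set Q : ℝ := ∑ i, ∑ j, if G.Adj i j then (x i - x j)^2 else 0 with hQdef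
  set P : Finset (V × V) :=
    (univ ×ˢ univ).filter (fun p : V × V => p.1 ∈ S ∧ p.2 ∈ S ∧ G.Adj p.1 p.2) with hPdef
  have hd : ∀ i j, x i - x j = (if i ∈ S then (1:ℝ) else 0) - (if j ∈ S then 1 else 0) := by
    intro i j; simp only [hxdef]; ring
  have hterm2 : ∀ i j, (if G.Adj i j then (x i - x j)^2 else 0)
      = (if G.Adj i j ∧ i ∈ S then (1:ℝ) else 0) + (if G.Adj i j ∧ j ∈ S then 1 else 0)
        - 2 * (if i ∈ S ∧ j ∈ S ∧ G.Adj i j then 1 else 0) := by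
    intro i j
    rw [hd i j]
    by_cases h1 : G.Adj i j <;> by_cases h2 : i ∈ S <;> by_cases h3 : j ∈ S <;>
      simp [h1, h2, h3] <;> norm_num
  have hA : ∑ i, ∑ j, (if G.Adj i j ∧ i ∈ S then (1:ℝ) else 0) = 5 * s := by
    have inner : ∀ i, ∑ j, (if G.Adj i j ∧ i ∈ S then (1:ℝ) else 0)
        = if i ∈ S then 5 else 0 := by
      intro i; by_cases hi : i ∈ S
      · simp only [hi, and_true, if_true]
        rw [← degree_eq_sum_if_adj, hreg i]; norm_num
      · simp [hi]
    rw [Finset.sum_congr rfl fun i _ => inner i, Finset.sum_ite_mem, Finset.univ_inter,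
      Finset.sum_const, nsmul_eq_mul]
    ring
  have hB : ∑ i, ∑ j, (if G.Adj i j ∧ j ∈ S then (1:ℝ) else 0) = 5 * s := by
    rw [Finset.sum_comm]
    have inner : ∀ j, ∑ i, (if G.Adj i j ∧ j ∈ S then (1:ℝ) else 0)
        = if j ∈ S then 5 else 0 := by
      intro j; by_cases hj : j ∈ S
      · simp only [hj, and_true, if_true]
        have : ∀ i, (if G.Adj i j then (1:ℝ) else 0) = if G.Adj j i then 1 else 0 := by
          intro i; simp [G.adj_comm i j]
        rw [Finset.sum_congr rfl fun i _ => this i]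
        rw [← degree_eq_sum_if_adj, hreg j]; norm_num
      · simp [hj]
    rw [Finset.sum_congr rfl fun j _ => inner j, Finset.sum_ite_mem, Finset.univ_inter,
      Finset.sum_const, nsmul_eq_mul]
    ring
  have hC : ∑ i, ∑ j, (if i ∈ S ∧ j ∈ S ∧ G.Adj i j then (1:ℝ) else 0) = (P.card : ℝ) := by
    rw [← Finset.sum_product', hPdef, Finset.sum_boole]
  have hQ : Q = 5*s + 5*s - 2*(P.card : ℝ) := by
    rw [hQdef]
    rw [Finset.sum_congr rfl fun i _ => Finset.sum_congr rfl fun j _ => hterm2 i j]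
    simp only [Finset.sum_add_distrib, Finset.sum_sub_distrib, ← Finset.mul_sum]
    rw [hA, hB, hC]
  have hQle : Q ≤ 6 * s := by
    have hP' : 2 * s ≤ (P.card : ℝ) := by
      rw [hsdef]; exact_mod_cast hP
    linarith
  have hgap := spectral_gap G hconn hL mu i₀ hmin hmupos x hs0
  have hform : x ⬝ᵥ (G.lapMatrix ℝ *ᵥ x) = Q / 2 := by
    rw [← Matrix.toLinearMap₂'_apply', lapMatrix_toLinearMap₂', hQdef]
  rw [hsq, hform] at hgap
  linarith

end Aux

section Main
open Matrix

theorem stmt_9 {V : Type*} [Fintype V] [DecidableEq V]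
    (G : SimpleGraph V) [DecidableRel G.Adj]
    (n : ℕ) (hn : Fintype.card V = n)
    (hconn : G.Connected)
    (hreg : G.IsRegularOfDegree 5)
    (mu : ℝ) (hmu : ∃ hL : (G.lapMatrix ℝ).IsHermitian, IsSecondSmallest hL.eigenvalues mu)
    :
    ((⌈(n : ℝ) * mu / ((n : ℝ) + mu)⌉.toNat : ℕ∞) ≤ G.egirth) := by
  obtain ⟨hL, i₀, i₁, hne01, h0le, h1, hmin⟩ := hmu
  haveI : Nonempty V := hconn.nonempty
  have hn1 : 1 ≤ n := by rw [← hn]; exact Fintype.card_pos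
  have hmu0 : 0 ≤ mu := h1 ▸ (G.posSemidef_lapMatrix ℝ).eigenvalues_nonneg i₁
  rcases eq_or_lt_of_le hmu0 with hmueq | hmupos
  · rw [← hmueq]
    simp
  by_cases hacyc : G.IsAcyclic
  · rw [egirth_eq_top.mpr hacyc]; exact le_top
  obtain ⟨a, w, hcyc, hg⟩ := (exists_egirth_eq_length (G := G)).mpr hacyc
  rw [hg]
  set g : ℕ := w.length with hgdef
  have hg3 : 3 ≤ g := hcyc.three_le_length
  -- the vertex set of the cycle
  set S : Finset V := w.support.toFinset with hSdef
  have htail : a ∈ w.support.tail := by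
    cases w with
    | nil => exact absurd rfl hcyc.ne_nil
    | cons h p => simpa [Walk.support_cons] using p.end_mem_support
  have hStail : S = w.support.tail.toFinset := by
    ext v
    simp only [hSdef, List.mem_toFinset, Walk.mem_support_iff]
    constructor
    · rintro (rfl | h)
      · exact htail
      · exact h
    · exact Or.inr
  have hScard : S.card = g := by
    rw [hStail, List.toFinset_card_of_nodup hcyc.support_nodup, List.length_tail,
      Walk.length_support]
    omega
  have hgn : g ≤ n := by
    rw [← hScard, ← hn]
    exact Finset.card_le_card (Finset.subset_univ S)
  -- the darts of the cycle and their reversals give 2g ordered adjacent pairs in S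
  have hednd : (w.darts.map SimpleGraph.Dart.edge).Nodup := hcyc.isCircuit.isTrail.edges_nodup
  have hdnd : w.darts.Nodup := hednd.of_map
  have hinj := List.inj_on_of_nodup_map hednd
  set L : List G.Dart := w.darts ++ w.darts.map SimpleGraph.Dart.symm with hLdef
  have hnd : L.Nodup := by
    rw [hLdef, List.nodup_append]
    refine ⟨hdnd, hdnd.map SimpleGraph.Dart.symm_involutive.injective, ?_⟩
    intro d hd d' hd' hdd
    subst hdd
    obtain ⟨e', he', rfl⟩ := List.mem_map.mp hd'
    have hedge : (e'.symm).edge = e'.edge := SimpleGraph.Dart.edge_symm e'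
    have : e'.symm = e' := hinj hd he' hedge
    exact SimpleGraph.Dart.symm_ne e' this
  have hLlen : L.length = 2 * g := by
    rw [hLdef, List.length_append, List.length_map, Walk.length_darts, hgdef]
    ring
  set P : Finset (V × V) :=
    (univ ×ˢ univ).filter (fun p : V × V => p.1 ∈ S ∧ p.2 ∈ S ∧ G.Adj p.1 p.2) with hPdef
  have hsub : L.toFinset.image SimpleGraph.Dart.toProd ⊆ P := by
    intro p hp
    simp only [Finset.mem_image, List.mem_toFinset] at hp
    obtain ⟨d, hd, rfl⟩ := hp
    rw [hLdef, List.mem_append] at hd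
    simp only [hPdef, Finset.mem_filter, Finset.mem_product, Finset.mem_univ, true_and,
      and_true]
    rcases hd with hd | hd
    · exact ⟨List.mem_toFinset.mpr (w.dart_fst_mem_support_of_mem_darts hd),
        List.mem_toFinset.mpr (w.dart_snd_mem_support_of_mem_darts hd), d.adj⟩
    · obtain ⟨e', he', rfl⟩ := List.mem_map.mp hd
      exact ⟨List.mem_toFinset.mpr (w.dart_snd_mem_support_of_mem_darts he'),
        List.mem_toFinset.mpr (w.dart_fst_mem_support_of_mem_darts he'), e'.symm.adj⟩
  have hPcard : 2 * S.card ≤ P.card := by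
    have h1 : (L.toFinset.image SimpleGraph.Dart.toProd).card = L.length := by
      rw [Finset.card_image_of_injective _ SimpleGraph.Dart.toProd_injective,
        List.toFinset_card_of_nodup hnd]
    have h2 := Finset.card_le_card hsub
    rw [h1, hLlen, hScard] at *
    omega
  -- apply the spectral bound
  have hcut := cut_bound G hconn hL mu i₀ hmin hmupos hreg S hPcard
  rw [hScard, hn] at hcut
  -- final arithmetic
  have hnR : (1:ℝ) ≤ n := by exact_mod_cast hn1
  have hgR : (3:ℝ) ≤ g := by exact_mod_cast hg3
  have hgnR : (g:ℝ) ≤ n := by exact_mod_cast hgn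
  have hkey : (n : ℝ) * mu / ((n : ℝ) + mu) ≤ g := by
    rw [div_le_iff₀ (by linarith)]
    -- from hcut : mu * (g - g^2/n) ≤ 3 * g, get mu * (n - g) ≤ 3 * n
    have h2 : mu * ((n:ℝ) - g) ≤ 3 * n := by
      have hne : (n:ℝ) ≠ 0 := by linarith
      have h3 : mu * ((g:ℝ) - (g:ℝ)^2 / n) * n ≤ 3 * g * n := by
        apply mul_le_mul_of_nonneg_right hcut (by linarith)
      have hdiv : (g:ℝ)^2 / n * n = (g:ℝ)^2 := div_mul_cancel₀ _ hne
      have h4 : mu * ((g:ℝ) * (n - g)) ≤ 3 * g * n := by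
        calc mu * ((g:ℝ) * (n - g)) = mu * ((g:ℝ)*n - (g:ℝ)^2) := by ring
          _ = mu * ((g:ℝ)*n - (g:ℝ)^2/n*n) := by rw [hdiv]
          _ = mu * ((g:ℝ) - (g:ℝ)^2 / n) * n := by ring
          _ ≤ 3 * g * n := h3
      nlinarith [hgR, hnR]
    nlinarith [hgR, hnR, hgnR, hmupos.le]
  have hceil : (⌈(n : ℝ) * mu / ((n : ℝ) + mu)⌉.toNat : ℕ) ≤ g := by
    rw [Int.toNat_le]
    exact Int.ceil_le.mpr (by exact_mod_cast hkey)
  exact_mod_cast Nat.cast_le.mpr hceil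

end Main
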